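/- Let d ≥ 3 and L ≥ 1. Let c₁, c₂ be edge colorings (with colors in a common set) of two disjoint complete d-ary trees with L levels such that within each tree any two distinct edges at distance at most L receive distinct colors. Then m(c₁,c₂) ≥ (1 − L²/d^{⌊L/2⌋} − Σ_{i=1}^{⌊L/2⌋} i/d^{i}) · d^{2L}. -/

import Mathlib

/-- An edge of the complete `d`-ary tree with `ℓ` levels: a nonempty sequence over `Fin d`
of length at most `ℓ`, indexing the vertex that the edge joins to its parent. -/
def TreeEdge (d ℓ : ℕ) : Type := {s : List (Fin d) // s ≠ [] ∧ s.length ≤ ℓ}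

/-- A leaf of the complete `d`-ary tree with `ℓ` levels: a sequence of length `ℓ`. -/
def TreeLeaf (d ℓ : ℕ) : Type := {s : List (Fin d) // s.length = ℓ}

/-- The root-to-leaf path `P(v)`: the set of (edges indexed by) nonempty prefixes of `v`. -/
def leafPath {d ℓ : ℕ} (v : TreeLeaf d ℓ) : Set (TreeEdge d ℓ) := {e | e.1 <+: v.1}

/-- The set of pairs of leaves `(v, w)` such that the combined path `P(v) ∪ P(w)` is
rainbow: `c₁` is injective on `P(v)`, `c₂` is injective on `P(w)`, and the color sets
`c₁(P(v))` and `c₂(P(w))` are disjoint. -/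
def rainbowPairs {C : Type*} {d ℓ : ℕ} (c₁ c₂ : TreeEdge d ℓ → C) :
    Set (TreeLeaf d ℓ × TreeLeaf d ℓ) :=
  {p | Set.InjOn c₁ (leafPath p.1) ∧ Set.InjOn c₂ (leafPath p.2) ∧
    Disjoint (c₁ '' leafPath p.1) (c₂ '' leafPath p.2)}

/-- `m(c₁,c₂)`: the number of pairs of leaves whose combined root-to-leaf paths are rainbow. -/
noncomputable def mPairs {C : Type*} {d ℓ : ℕ} (c₁ c₂ : TreeEdge d ℓ → C) : ℕ :=
  Nat.card (rainbowPairs c₁ c₂)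

/-- The length of the longest common prefix of two lists. -/
def lcpLen {α : Type*} [DecidableEq α] : List α → List α → ℕ
  | a :: s, b :: t => if a = b then lcpLen s t + 1 else 0
  | _, _ => 0

/-- The distance between two edges `s, t` of the tree (edges being indexed by the sequences
of their lower endpoints): the number of vertices on a shortest path between them. If one of
`s, t` is a prefix of the other it is `| |s| − |t| |`, and otherwise it is
`|s| + |t| − 2a − 1` where `a` is the length of the longest common prefix of `s` and `t`
(so incident edges have distance 1). -/
def edgeDist {α : Type*} [DecidableEq α] (s t : List α) : ℕ :=
  if s <+: t ∨ t <+: s then Nat.dist s.length t.length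
  else s.length + t.length - 2 * lcpLen s t - 1

namespace Stmt5

lemma lcpLen_ge {α : Type*} [DecidableEq α] :
    ∀ (s t : List α) (k : ℕ), k ≤ s.length → k ≤ t.length →
    s.take k = t.take k → k ≤ lcpLen s t := by
  intro s
  induction s with
  | nil => intro t k h1 _ _; simp at h1; omega
  | cons a s ih =>
    intro t k h1 h2 h3
    match t, k with
    | _, 0 => omega
    | [], k + 1 => simp at h2
    | b :: t, k + 1 =>
      simp only [List.take_succ_cons, List.cons.injEq] at h3
      obtain ⟨hab, hst⟩ := h3
      subst hab
      have heq : lcpLen (a :: s) (a :: t) = lcpLen s t + 1 := by simp [lcpLen]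
      have := ih t k (by simpa using h1) (by simpa using h2) hst
      omega

lemma edgeDist_le_max {α : Type*} [DecidableEq α] (s t : List α)
    (h : s <+: t ∨ t <+: s) : edgeDist s t ≤ max s.length t.length := by
  rw [edgeDist, if_pos h]
  simp [Nat.dist]; omega

lemma edgeDist_le_add {α : Type*} [DecidableEq α] (s t : List α)
    (hs : 1 ≤ s.length) (ht : 1 ≤ t.length) :
    edgeDist s t ≤ s.length + t.length - 1 := by
  rw [edgeDist]; split
  · simp [Nat.dist]; omega
  · omega

lemma edgeDist_le_of_take_eq {α : Type*} [DecidableEq α] (s t : List α) (j k : ℕ)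
    (hs : s.length = j) (ht : t.length = j) (hk : k ≤ j) (hne : s ≠ t)
    (h : s.take k = t.take k) :
    edgeDist s t ≤ 2*j - 2*k - 1 := by
  rw [edgeDist, if_neg]
  · have := lcpLen_ge s t k (by omega) (by omega) h
    omega
  · rintro (hp | hp)
    · exact hne (hp.eq_of_length (by omega))
    · exact hne ((hp.eq_of_length (by omega)).symm)

lemma prefix_comp {α : Type*} {l₁ l₂ l₃ : List α} (h1 : l₁ <+: l₃) (h2 : l₂ <+: l₃) :
    l₁ <+: l₂ ∨ l₂ <+: l₁ := by
  have e1 := List.prefix_iff_eq_take.mp h1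
  have e2 := List.prefix_iff_eq_take.mp h2
  rcases le_total l₁.length l₂.length with h | h
  · left
    have : l₁ = l₂.take l₁.length := by
      calc l₁ = l₃.take l₁.length := e1
        _ = (l₃.take l₂.length).take l₁.length := by
            rw [List.take_take, min_eq_left h]
        _ = l₂.take l₁.length := by rw [← e2]
    rw [this]; exact List.take_prefix _ _
  · right
    have : l₂ = l₁.take l₂.length := by
      calc l₂ = l₃.take l₂.length := e2
        _ = (l₃.take l₁.length).take l₂.length := by
            rw [List.take_take, min_eq_left h]
        _ = l₁.take l₂.length := by rw [← e1]
    rw [this]; exact List.take_prefix _ _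

instance {d L : ℕ} : Finite (TreeLeaf d L) :=
  inferInstanceAs (Finite (List.Vector (Fin d) L))

instance {d L : ℕ} : Finite (TreeEdge d L) := by
  have h : {s : List (Fin d) | s.length ≤ L}.Finite := List.finite_length_le _ _
  have : Finite {s : List (Fin d) // s.length ≤ L} := h.to_subtype
  exact Finite.of_injective
    (fun e : TreeEdge d L => (⟨e.1, e.2.2⟩ : {s : List (Fin d) // s.length ≤ L}))
    (by
      intro a b hab
      have hab' : (⟨a.1, a.2.2⟩ : {s : List (Fin d) // s.length ≤ L}) =
          ⟨b.1, b.2.2⟩ := hab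
      exact Subtype.ext (congrArg
        (fun x : {s : List (Fin d) // s.length ≤ L} => x.1) hab'))

lemma card_vec (d n : ℕ) : Nat.card (List.Vector (Fin d) n) = d ^ n := by
  rw [Nat.card_eq_fintype_card, card_vector, Fintype.card_fin]

lemma card_leaf (d L : ℕ) : Nat.card (TreeLeaf d L) = d ^ L := card_vec d L

lemma ncard_le_of_injOn {β γ : Type*} [Finite γ] (s : Set β) (f : β → γ)
    (hinj : Set.InjOn f s) : s.ncard ≤ Nat.card γ := by
  rw [← Set.ncard_univ]
  exact Set.ncard_le_ncard_of_injOn f (fun a _ => Set.mem_univ _) hinj (Set.toFinite _)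

lemma ncard_biUnion_le {ι β : Type*} [Finite β] (s : Finset ι) (f : ι → Set β) :
    (⋃ i ∈ s, f i).ncard ≤ ∑ i ∈ s, (f i).ncard := by
  classical
  induction s using Finset.induction_on with
  | empty => simp
  | insert _ _ h ih =>
    rename_i a s
    rw [Finset.sum_insert h, Finset.set_biUnion_insert]
    exact le_trans (Set.ncard_union_le _ _) (by omega)

lemma card_depth_le {d L : ℕ} (s : Finset (TreeEdge d L)) (i : ℕ)
    (hs : ∀ e ∈ s, e.1.length = i) : s.card ≤ d ^ i := by
  classical
  have hfin : {l : List (Fin d) | l.length = i}.Finite := List.finite_length_eq _ _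
  have h1 : s.card ≤ hfin.toFinset.card := by
    apply Finset.card_le_card_of_injOn (fun e => e.1)
    · intro e he
      simp only [Finset.mem_coe, Set.Finite.mem_toFinset, Set.mem_setOf_eq]
      exact hs e he
    · intro a _ b _ hab; exact Subtype.ext hab
  refine le_trans h1 ?_
  rw [← Set.ncard_eq_toFinset_card _ hfin, ← Nat.card_coe_set_eq]
  exact le_of_eq (card_vec d i)

/-- The count of leaf pairs where the first leaf is arbitrary and the second passes
through an edge of depth `j` whose color is determined (via `c₁` of a prefix of the
first leaf). -/
lemma card_deep {d L : ℕ} {C : Type*} (c₁ c₂ : TreeEdge d L → C)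
    (h₂ : ∀ e f : TreeEdge d L, e ≠ f → edgeDist e.1 f.1 ≤ L → c₂ e ≠ c₂ f)
    (i j : ℕ) (hj1 : L/2 + 1 ≤ j) (hj2 : j ≤ L) :
    {p : TreeLeaf d L × TreeLeaf d L | ∃ e f : TreeEdge d L,
      e.1 <+: p.1.1 ∧ f.1 <+: p.2.1 ∧ e.1.length = i ∧ f.1.length = j ∧ c₁ e = c₂ f}.ncard
      ≤ d ^ (2*L - L/2) := by
  have hcard : (d:ℕ) ^ (2*L - L/2) = Nat.card (TreeLeaf d L ×
      (List.Vector (Fin d) (j - L/2) × List.Vector (Fin d) (L - j))) := by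
    rw [Nat.card_prod, Nat.card_prod, card_vec, card_vec, card_leaf, ← pow_add, ← pow_add]
    congr 1; omega
  haveI : Finite {l : List (Fin d) // l.length = j - L/2} :=
    inferInstanceAs (Finite (List.Vector (Fin d) (j - L/2)))
  haveI : Finite {l : List (Fin d) // l.length = L - j} :=
    inferInstanceAs (Finite (List.Vector (Fin d) (L - j)))
  rw [hcard]
  apply ncard_le_of_injOn _ (fun p =>
    (p.1, (⟨p.2.1.take (j - L/2), by rw [List.length_take, p.2.2]; omega⟩ :
            List.Vector (Fin d) (j - L/2)),
          (⟨p.2.1.drop j, by rw [List.length_drop, p.2.2]⟩ :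
            List.Vector (Fin d) (L - j))))
  rintro p ⟨e, f, hev, hfw, hei, hfj, hcol⟩ q ⟨e', f', hev', hfw', hei', hfj', hcol'⟩ heq
  simp only [Prod.mk.injEq, Subtype.mk.injEq] at heq
  obtain ⟨h1, h2, h3⟩ := heq
  have he : e = e' := by
    apply Subtype.ext
    have t1 := List.prefix_iff_eq_take.mp hev
    have t2 := List.prefix_iff_eq_take.mp hev'
    rw [t1, t2, hei, hei', h1]
  have hff : f.1 = p.2.1.take j := by
    have := List.prefix_iff_eq_take.mp hfw; rwa [hfj] at this
  have hff' : f'.1 = q.2.1.take j := by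
    have := List.prefix_iff_eq_take.mp hfw'; rwa [hfj'] at this
  have htk : f.1.take (j - L/2) = f'.1.take (j - L/2) := by
    rw [hff, hff', List.take_take, List.take_take, min_eq_left (by omega), h2]
  have hcc : c₂ f = c₂ f' := by rw [← hcol, ← hcol', he]
  have hf : f = f' := by
    by_contra hne
    have hne' : f.1 ≠ f'.1 := fun hh => hne (Subtype.ext hh)
    have hd := edgeDist_le_of_take_eq f.1 f'.1 j (j - L/2) hfj hfj' (by omega) hne' htk
    exact h₂ f f' hne (le_trans hd (by omega)) hcc
  have hv : p.2.1 = q.2.1 := by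
    rw [← List.take_append_drop j p.2.1, ← List.take_append_drop j q.2.1,
      ← hff, ← hff', hf, h3]
  exact Prod.ext h1 (Subtype.ext hv)

end Stmt5

/-- let `d ≥ 3`, `L ≥ 1`, and let `c₁, c₂` be edge colorings of two disjoint
complete `d`-ary trees with `L` levels such that within each tree any two distinct edges at
distance at most `L` receive distinct colors. Then
`m(c₁,c₂) ≥ (1 − L²/d^⌊L/2⌋ − Σ_{i=1}^{⌊L/2⌋} i/d^i) · d^(2L)`. -/
theorem stmt_5 (d L : ℕ) (hd : 3 ≤ d) (hL : 1 ≤ L) {C : Type*}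
    (c₁ c₂ : TreeEdge d L → C)
    (h₁ : ∀ e f : TreeEdge d L, e ≠ f → edgeDist e.1 f.1 ≤ L → c₁ e ≠ c₁ f)
    (h₂ : ∀ e f : TreeEdge d L, e ≠ f → edgeDist e.1 f.1 ≤ L → c₂ e ≠ c₂ f) :
    (mPairs c₁ c₂ : ℝ) ≥
      (1 - (L : ℝ) ^ 2 / (d : ℝ) ^ (L / 2)
          - ∑ i ∈ Finset.Icc 1 (L / 2), (i : ℝ) / (d : ℝ) ^ i) * (d : ℝ) ^ (2 * L) := by
  classical
  have hlenE : ∀ e : TreeEdge d L, 1 ≤ e.1.length ∧ e.1.length ≤ L :=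
    fun e => ⟨List.length_pos_iff.mpr e.2.1, e.2.2⟩
  have shallow : ∀ (c : TreeEdge d L → C),
      (∀ e f : TreeEdge d L, e ≠ f → edgeDist e.1 f.1 ≤ L → c e ≠ c f) →
      ∀ e f : TreeEdge d L, e.1.length + f.1.length ≤ L + 1 → c e = c f → e = f := by
    intro c hc e f hlen hcol
    by_contra hne
    refine hc e f hne (le_trans (Stmt5.edgeDist_le_add _ _ (hlenE e).1 (hlenE f).1) ?_) hcol
    omega
  have pathInj : ∀ (c : TreeEdge d L → C),
      (∀ e f : TreeEdge d L, e ≠ f → edgeDist e.1 f.1 ≤ L → c e ≠ c f) →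
      ∀ v : TreeLeaf d L, Set.InjOn c (leafPath v) := by
    intro c hc v e he f hf hcol
    by_contra hne
    have hor := Stmt5.prefix_comp he hf
    refine hc e f hne (le_trans (Stmt5.edgeDist_le_max _ _ hor) ?_) hcol
    have h1 := (hlenE e).2
    have h2 := (hlenE f).2
    omega
  set B : ℕ × ℕ → Set (TreeLeaf d L × TreeLeaf d L) := fun q =>
    {p | ∃ e f : TreeEdge d L, e.1 <+: p.1.1 ∧ f.1 <+: p.2.1 ∧
      e.1.length = q.1 ∧ f.1.length = q.2 ∧ c₁ e = c₂ f} with hB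
  set S : Finset (ℕ × ℕ) :=
    (Finset.Icc 1 L ×ˢ Finset.Icc 1 L).filter
      (fun q => L/2 + 1 ≤ q.1 ∨ L/2 + 1 ≤ q.2) with hS
  have cardB : ∀ q ∈ S, (B q).ncard ≤ d ^ (2*L - L/2) := by
    intro q hq
    simp only [hS, Finset.mem_filter, Finset.mem_product, Finset.mem_Icc] at hq
    obtain ⟨⟨⟨hi1, hi2⟩, hj1, hj2⟩, hdeep⟩ := hq
    rcases hdeep with hdeep | hdeep
    · have hsw : (B q).ncard ≤ ({p : TreeLeaf d L × TreeLeaf d L |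
          ∃ e f : TreeEdge d L, e.1 <+: p.1.1 ∧ f.1 <+: p.2.1 ∧
            e.1.length = q.2 ∧ f.1.length = q.1 ∧ c₂ e = c₁ f}).ncard := by
        apply Set.ncard_le_ncard_of_injOn Prod.swap
        · rintro p ⟨e, f, hev, hfw, hei, hfj, hcol⟩
          exact ⟨f, e, hfw, hev, hfj, hei, hcol.symm⟩
        · intro a _ b _ hab
          exact Prod.swap_injective hab
      exact le_trans hsw (Stmt5.card_deep c₂ c₁ h₁ q.2 q.1 hdeep hi2)
    · exact Stmt5.card_deep c₁ c₂ h₂ q.1 q.2 hdeep hj2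
  have cardU1 : (⋃ q ∈ S, B q).ncard ≤ L^2 * d ^ (2*L - L/2) := by
    refine le_trans (Stmt5.ncard_biUnion_le S B) ?_
    refine le_trans (Finset.sum_le_card_nsmul S _ _ cardB) ?_
    rw [smul_eq_mul]
    have hScard : S.card ≤ L^2 := by
      refine le_trans (Finset.card_filter_le _ _) ?_
      rw [Finset.card_product, Nat.card_Icc]
      have : L + 1 - 1 = L := by omega
      rw [this, pow_two]
    exact Nat.mul_le_mul_right _ hScard
  -- shallow part
  have uniq₁ := shallow c₁ h₁
  have uniq₂ := shallow c₂ h₂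
  obtain ⟨Φ, hΦ⟩ : ∃ Φ : TreeEdge d L → TreeEdge d L,
      ∀ e : TreeEdge d L, (∃ f : TreeEdge d L, f.1.length ≤ L/2 ∧ c₂ f = c₁ e) →
        (Φ e).1.length ≤ L/2 ∧ c₂ (Φ e) = c₁ e := by
    refine ⟨fun e => if h : ∃ f : TreeEdge d L, f.1.length ≤ L/2 ∧ c₂ f = c₁ e
      then h.choose else e, fun e he => ?_⟩
    simp only [dif_pos he]
    exact he.choose_spec
  set A : TreeEdge d L → Set (TreeLeaf d L) := fun e => {v | e.1 <+: v.1} with hA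
  set Sh' : Finset (TreeEdge d L) := (Set.toFinite {e : TreeEdge d L |
      e.1.length ≤ L/2 ∧ ∃ f : TreeEdge d L, f.1.length ≤ L/2 ∧ c₂ f = c₁ e}).toFinset
    with hSh'
  have cardAA : ∀ e f : TreeEdge d L,
      (A e ×ˢ A f).ncard ≤ d ^ (L - e.1.length) * d ^ (L - f.1.length) := by
    intro e f
    haveI : Finite {l : List (Fin d) // l.length = L - e.1.length} :=
      inferInstanceAs (Finite (List.Vector (Fin d) (L - e.1.length)))
    haveI : Finite {l : List (Fin d) // l.length = L - f.1.length} :=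
      inferInstanceAs (Finite (List.Vector (Fin d) (L - f.1.length)))
    have hc : d ^ (L - e.1.length) * d ^ (L - f.1.length) =
        Nat.card (List.Vector (Fin d) (L - e.1.length) ×
                  List.Vector (Fin d) (L - f.1.length)) := by
      rw [Nat.card_prod, Stmt5.card_vec, Stmt5.card_vec]
    rw [hc]
    apply Stmt5.ncard_le_of_injOn _ (fun p =>
      ((⟨p.1.1.drop e.1.length, by rw [List.length_drop, p.1.2]⟩ :
          List.Vector (Fin d) (L - e.1.length)),
       (⟨p.2.1.drop f.1.length, by rw [List.length_drop, p.2.2]⟩ :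
          List.Vector (Fin d) (L - f.1.length))))
    rintro p ⟨hpe, hpf⟩ q ⟨hqe, hqf⟩ heq
    simp only [Prod.mk.injEq, Subtype.mk.injEq] at heq
    obtain ⟨h1, h2⟩ := heq
    simp only [hA, Set.mem_setOf_eq] at hpe hpf hqe hqf
    have k1 : p.1.1 = q.1.1 := by
      rw [← List.take_append_drop e.1.length p.1.1,
        ← List.take_append_drop e.1.length q.1.1,
        ← List.prefix_iff_eq_take.mp hpe, ← List.prefix_iff_eq_take.mp hqe, h1]
    have k2 : p.2.1 = q.2.1 := by
      rw [← List.take_append_drop f.1.length p.2.1,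
        ← List.take_append_drop f.1.length q.2.1,
        ← List.prefix_iff_eq_take.mp hpf, ← List.prefix_iff_eq_take.mp hqf, h2]
    exact Prod.ext (Subtype.ext k1) (Subtype.ext k2)
  have cover : (rainbowPairs c₁ c₂)ᶜ ⊆ (⋃ q ∈ S, B q) ∪ ⋃ e ∈ Sh', A e ×ˢ A (Φ e) := by
    intro p hp
    have hnd : ¬ Disjoint (c₁ '' leafPath p.1) (c₂ '' leafPath p.2) := by
      intro hdis; exact hp ⟨pathInj c₁ h₁ p.1, pathInj c₂ h₂ p.2, hdis⟩
    rw [Set.not_disjoint_iff] at hnd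
    obtain ⟨x, ⟨e, he, hxe⟩, ⟨f, hf, hxf⟩⟩ := hnd
    have hcol : c₁ e = c₂ f := by rw [hxe, hxf]
    by_cases hcase : e.1.length ≤ L/2 ∧ f.1.length ≤ L/2
    · right
      have heSh : e ∈ Sh' := by
        rw [hSh', Set.Finite.mem_toFinset]
        exact ⟨hcase.1, f, hcase.2, hcol.symm⟩
      have hmatch := hΦ e ⟨f, hcase.2, hcol.symm⟩
      have hfe : Φ e = f := by
        refine uniq₂ (Φ e) f ?_ (by rw [hmatch.2, hcol])
        have := hmatch.1
        have := hcase.2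
        omega
      refine Set.mem_iUnion₂.mpr ⟨e, heSh, ?_⟩
      exact ⟨he, by rw [hfe]; exact hf⟩
    · left
      have hqS : (e.1.length, f.1.length) ∈ S := by
        simp only [hS, Finset.mem_filter, Finset.mem_product, Finset.mem_Icc]
        refine ⟨⟨⟨(hlenE e).1, (hlenE e).2⟩, (hlenE f).1, (hlenE f).2⟩, by omega⟩
      refine Set.mem_iUnion₂.mpr ⟨(e.1.length, f.1.length), hqS, ?_⟩
      exact ⟨e, f, he, hf, rfl, rfl, hcol⟩
  have hΦinj : ∀ x ∈ Sh', ∀ y ∈ Sh', Φ x = Φ y → x = y := by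
    intro x hx y hy hxy
    rw [hSh', Set.Finite.mem_toFinset] at hx hy
    have hmx := hΦ x hx.2
    have hmy := hΦ y hy.2
    have hcc : c₁ x = c₁ y := by rw [← hmx.2, ← hmy.2, hxy]
    refine uniq₁ x y ?_ hcc
    have := hx.1; have := hy.1; omega
  have hfibsum : ∀ (t : Finset (TreeEdge d L)), (∀ e ∈ t, e.1.length ≤ L/2) →
      ∑ e ∈ t, (d ^ (L - e.1.length))^2 ≤ ∑ i ∈ Finset.Icc 1 (L/2), d ^ (2*L - i) := by
    intro t ht
    have hmaps : ∀ e ∈ t, e.1.length ∈ Finset.Icc 1 (L/2) := by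
      intro e he; rw [Finset.mem_Icc]; exact ⟨(hlenE e).1, ht e he⟩
    rw [← Finset.sum_fiberwise_of_maps_to hmaps]
    refine Finset.sum_le_sum ?_
    intro i hi
    rw [Finset.mem_Icc] at hi
    have hb : ∀ e ∈ t.filter (fun e => e.1.length = i),
        (d ^ (L - e.1.length))^2 ≤ (d^(L-i))^2 := by
      intro e he; rw [(Finset.mem_filter.mp he).2]
    refine le_trans (Finset.sum_le_card_nsmul _ _ _ hb) ?_
    rw [smul_eq_mul]
    have hcnt : (t.filter (fun e => e.1.length = i)).card ≤ d ^ i :=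
      Stmt5.card_depth_le _ i (fun e he => (Finset.mem_filter.mp he).2)
    calc (t.filter (fun e => e.1.length = i)).card * (d^(L-i))^2
        ≤ d^i * (d^(L-i))^2 := Nat.mul_le_mul_right _ hcnt
      _ = d ^ (2*L - i) := by
          rw [← pow_mul, ← pow_add]; congr 1; omega
  have T1 : (⋃ e ∈ Sh', A e ×ˢ A (Φ e)).ncard ≤
      ∑ i ∈ Finset.Icc 1 (L/2), d ^ (2*L - i) := by
    refine le_trans (Stmt5.ncard_biUnion_le Sh' _) ?_
    have step1 : ∑ e ∈ Sh', (A e ×ˢ A (Φ e)).ncard ≤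
        ∑ e ∈ Sh', d ^ (L - e.1.length) * d ^ (L - (Φ e).1.length) :=
      Finset.sum_le_sum (fun e _ => cardAA e (Φ e))
    have step2 : 2 * ∑ e ∈ Sh', d ^ (L - e.1.length) * d ^ (L - (Φ e).1.length) ≤
        ∑ e ∈ Sh', (d ^ (L - e.1.length))^2 +
        ∑ e ∈ Sh', (d ^ (L - (Φ e).1.length))^2 := by
      rw [Finset.mul_sum, ← Finset.sum_add_distrib]
      refine Finset.sum_le_sum (fun e _ => ?_)
      rw [← mul_assoc]
      exact two_mul_le_add_sq _ _
    have hsub : ∀ e ∈ Sh', e.1.length ≤ L/2 := by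
      intro e he
      rw [hSh', Set.Finite.mem_toFinset] at he
      exact he.1
    have s1 : ∑ e ∈ Sh', (d ^ (L - e.1.length))^2 ≤
        ∑ i ∈ Finset.Icc 1 (L/2), d^(2*L-i) := hfibsum Sh' hsub
    have s2 : ∑ e ∈ Sh', (d ^ (L - (Φ e).1.length))^2 ≤
        ∑ i ∈ Finset.Icc 1 (L/2), d^(2*L-i) := by
      have himg := Finset.sum_image
        (f := fun x : TreeEdge d L => (d ^ (L - x.1.length))^2) hΦinj
      refine le_trans (le_of_eq himg.symm) (hfibsum (Sh'.image Φ) ?_)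
      intro g hg
      rw [Finset.mem_image] at hg
      obtain ⟨x, hx, rfl⟩ := hg
      rw [hSh', Set.Finite.mem_toFinset] at hx
      exact (hΦ x hx.2).1
    omega
  have hcompl : (rainbowPairs c₁ c₂)ᶜ.ncard ≤
      L^2 * d^(2*L - L/2) + ∑ i ∈ Finset.Icc 1 (L/2), d^(2*L-i) := by
    refine le_trans (Set.ncard_le_ncard cover (Set.toFinite _)) ?_
    refine le_trans (Set.ncard_union_le _ _) ?_
    exact Nat.add_le_add cardU1 T1
  have htot : (rainbowPairs c₁ c₂).ncard + (rainbowPairs c₁ c₂)ᶜ.ncard = d ^ (2*L) := by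
    rw [Set.ncard_add_ncard_compl]
    rw [Nat.card_prod, Stmt5.card_leaf, ← pow_add]
    congr 1; omega
  have hmp : mPairs c₁ c₂ = (rainbowPairs c₁ c₂).ncard := Nat.card_coe_set_eq _
  -- pass to the reals
  have hdR : (0:ℝ) < (d:ℝ) := by
    have : (0:ℕ) < d := by omega
    exact_mod_cast this
  have hpow : ∀ k : ℕ, k ≤ 2*L → (d:ℝ)^(2*L - k) * (d:ℝ)^k = (d:ℝ)^(2*L) := by
    intro k hk; rw [← pow_add]; congr 1; omega
  have e1 : ((rainbowPairs c₁ c₂).ncard : ℝ) =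
      (d:ℝ)^(2*L) - ((rainbowPairs c₁ c₂)ᶜ.ncard : ℝ) := by
    have hc := congrArg (Nat.cast : ℕ → ℝ) htot
    push_cast at hc
    linarith
  have e2 : ((rainbowPairs c₁ c₂)ᶜ.ncard : ℝ) ≤
      ((L:ℝ)^2 / (d:ℝ)^(L/2) + ∑ i ∈ Finset.Icc 1 (L/2), (i:ℝ)/(d:ℝ)^i) * (d:ℝ)^(2*L) := by
    have hcast : ((rainbowPairs c₁ c₂)ᶜ.ncard : ℝ) ≤
        (L:ℝ)^2 * (d:ℝ)^(2*L - L/2) +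
        ∑ i ∈ Finset.Icc 1 (L/2), (d:ℝ)^(2*L-i) := by
      exact_mod_cast hcompl
    refine le_trans hcast ?_
    rw [add_mul, Finset.sum_mul]
    refine add_le_add ?_ ?_
    · have hdm : (d:ℝ)^(L/2) ≠ 0 := by positivity
      have t1 : (L:ℝ)^2 / (d:ℝ)^(L/2) * (d:ℝ)^(2*L) = (L:ℝ)^2 * (d:ℝ)^(2*L - L/2) := by
        rw [div_mul_eq_mul_div, div_eq_iff hdm, mul_assoc, hpow (L/2) (by omega)]
      rw [t1]
    · refine Finset.sum_le_sum (fun i hi => ?_)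
      rw [Finset.mem_Icc] at hi
      have hdi : (d:ℝ)^i ≠ 0 := by positivity
      have t2 : (i:ℝ)/(d:ℝ)^i * (d:ℝ)^(2*L) = (i:ℝ) * (d:ℝ)^(2*L - i) := by
        rw [div_mul_eq_mul_div, div_eq_iff hdi, mul_assoc, hpow i (by omega)]
      rw [t2]
      refine le_mul_of_one_le_left (by positivity) ?_
      exact_mod_cast hi.1
  rw [ge_iff_le, hmp]
  have expand : (1 - (L:ℝ)^2 / (d:ℝ)^(L/2)
      - ∑ i ∈ Finset.Icc 1 (L/2), (i:ℝ)/(d:ℝ)^i) * (d:ℝ)^(2*L) =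
      (d:ℝ)^(2*L) - ((L:ℝ)^2 / (d:ℝ)^(L/2)
        + ∑ i ∈ Finset.Icc 1 (L/2), (i:ℝ)/(d:ℝ)^i) * (d:ℝ)^(2*L) := by ring
  rw [expand, e1]
  linarith
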